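/- Let n ≥ 1 and σ > 0, and set γ₊ = [[−σ·Iₙ, 0], [0, 1]]. Then the linear isometry group { a ∈ GL(n+1, ℝ) : aᵀ γ₊ a = γ₊ } (the Lorentz group of the metric γ₊) equals { k · exp(Z) : k ∈ K, Z ∈ 𝔭_σ } (its Cartan decomposition). -/

import Mathlib

open Matrix

noncomputable section

abbrev Idx (n : ℕ) := Fin n ⊕ Unit

/-- K = { [[R,0],[0,ε]] : R ∈ O(n), ε = ±1 } -/
def Kset (n : ℕ) : Set (Matrix (Idx n) (Idx n) ℝ) :=
  { m | ∃ (R : Matrix (Fin n) (Fin n) ℝ) (ε : ℝ),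
      Rᵀ * R = 1 ∧ (ε = 1 ∨ ε = -1) ∧
      m = fromBlocks R 0 0 (ε • (1 : Matrix Unit Unit ℝ)) }

/-- 𝔭_σ -/
def pSet (n : ℕ) (σ : ℝ) : Set (Matrix (Idx n) (Idx n) ℝ) :=
  { m | ∃ b : Fin n → ℝ,
      m = fromBlocks 0 (replicateCol Unit b) (σ • replicateRow Unit b) 0 }

/-- γ₊ = [[−σ·Iₙ, 0], [0, 1]] -/
def gammaPlus (n : ℕ) (σ : ℝ) : Matrix (Idx n) (Idx n) ℝ :=
  fromBlocks ((-σ) • (1 : Matrix (Fin n) (Fin n) ℝ)) 0 0 (1 : Matrix Unit Unit ℝ)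

namespace CartanAux

variable {n : ℕ} {σ : ℝ}

/-- candidate inverse of γ₊ -/
def gInv (n : ℕ) (σ : ℝ) : Matrix (Idx n) (Idx n) ℝ :=
  fromBlocks ((-σ⁻¹) • (1 : Matrix (Fin n) (Fin n) ℝ)) 0 0 (1 : Matrix Unit Unit ℝ)

lemma gamma_mul_gInv (hσ : σ ≠ 0) : gammaPlus n σ * gInv n σ = 1 := by
  simp [gammaPlus, gInv, fromBlocks_multiply, smul_smul, ← fromBlocks_one,
    Matrix.smul_mul, Matrix.mul_smul, mul_inv_cancel₀ hσ, inv_mul_cancel₀ hσ]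

lemma gInv_mul_gamma (hσ : σ ≠ 0) : gInv n σ * gammaPlus n σ = 1 := by
  simp [gammaPlus, gInv, fromBlocks_multiply, smul_smul, ← fromBlocks_one,
    Matrix.smul_mul, Matrix.mul_smul, inv_mul_cancel₀ hσ, mul_inv_cancel₀ hσ]

lemma isUnit_gamma (hσ : σ ≠ 0) : IsUnit (gammaPlus n σ) :=
  ⟨⟨gammaPlus n σ, gInv n σ, gamma_mul_gInv hσ, gInv_mul_gamma hσ⟩, rfl⟩

lemma gamma_inv_eq (hσ : σ ≠ 0) : (gammaPlus n σ)⁻¹ = gInv n σ :=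
  inv_eq_right_inv (gamma_mul_gInv hσ)

/-- the element of 𝔭 attached to b -/
def Zb (n : ℕ) (σ : ℝ) (b : Fin n → ℝ) : Matrix (Idx n) (Idx n) ℝ :=
  fromBlocks 0 (replicateCol Unit b) (σ • replicateRow Unit b) 0

lemma Zb_mem (b : Fin n → ℝ) : Zb n σ b ∈ pSet n σ := ⟨b, rfl⟩

lemma Zb_neg (b : Fin n → ℝ) : Zb n σ (-b) = -Zb n σ b := by
  ext i j
  cases i <;> cases j <;> simp [Zb, replicateCol, replicateRow]

lemma Zb_zero : Zb n σ (0 : Fin n → ℝ) = 0 := by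
  simp [Zb, ← fromBlocks_zero]

lemma Zb_transpose (hσ : σ ≠ 0) (b : Fin n → ℝ) :
    (Zb n σ b)ᵀ = gammaPlus n σ * -Zb n σ b * (gammaPlus n σ)⁻¹ := by
  rw [gamma_inv_eq hσ]
  ext i j
  cases i <;> cases j <;>
    simp [Zb, gammaPlus, gInv, mul_apply, Fintype.sum_sum_type, one_apply, replicateCol, replicateRow,
      mul_comm, hσ] <;> field_simp

lemma exp_neg_mul_exp (A : Matrix (Idx n) (Idx n) ℝ) :
    NormedSpace.exp (-A) * NormedSpace.exp A = 1 := by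
  rw [← Matrix.exp_add_of_commute (-A) A (Commute.refl A).neg_left, neg_add_cancel,
    NormedSpace.exp_zero]

lemma exp_mul_exp_neg (A : Matrix (Idx n) (Idx n) ℝ) :
    NormedSpace.exp A * NormedSpace.exp (-A) = 1 := by
  rw [← Matrix.exp_add_of_commute A (-A) (Commute.refl A).neg_right, add_neg_cancel,
    NormedSpace.exp_zero]

lemma exp_lorentz (hσ : σ ≠ 0) (b : Fin n → ℝ) :
    (NormedSpace.exp (Zb n σ b))ᵀ * gammaPlus n σ * NormedSpace.exp (Zb n σ b)
      = gammaPlus n σ := by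
  have h1 : (NormedSpace.exp (Zb n σ b))ᵀ = NormedSpace.exp ((Zb n σ b)ᵀ) :=
    (Matrix.exp_transpose _).symm
  rw [h1, Zb_transpose hσ, Matrix.exp_conj _ _ (isUnit_gamma hσ)]
  rw [gamma_inv_eq hσ]
  simp only [mul_assoc]
  rw [← mul_assoc (gInv n σ), gInv_mul_gamma hσ, one_mul, exp_neg_mul_exp, mul_one]

/-- the bottom unit row vector -/
def erow (n : ℕ) : Idx n → ℝ := Sum.elim 0 1

/-- the row vector coming from b -/
def uvec {n : ℕ} (b : Fin n → ℝ) : Idx n → ℝ := Sum.elim b 0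

lemma row_one : (1 : Matrix (Idx n) (Idx n) ℝ) (Sum.inr ()) = erow n := by
  funext j; cases j <;> simp [erow, one_apply]

lemma row_mul (M N : Matrix (Idx n) (Idx n) ℝ) (i : Idx n) :
    (M * N) i = vecMul (M i) N := by
  funext j; simp [mul_apply, vecMul, dotProduct]

lemma vecMul_smul' (c : ℝ) (v : Idx n → ℝ) (M : Matrix (Idx n) (Idx n) ℝ) :
    vecMul (c • v) M = c • vecMul v M := by
  funext j; simp [vecMul, dotProduct, Finset.mul_sum, mul_add, mul_assoc]

lemma row_Z (b : Fin n → ℝ) : (Zb n σ b) (Sum.inr ()) = σ • uvec b := by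
  funext j; cases j <;> simp [uvec, Zb, replicateCol, replicateRow]

lemma vecMul_e (b : Fin n → ℝ) : vecMul (erow n) (Zb n σ b) = σ • uvec b := by
  funext j
  cases j <;>
    simp [erow, uvec, vecMul, dotProduct, Zb, replicateCol, replicateRow, Fintype.sum_sum_type]

lemma vecMul_u (b : Fin n → ℝ) :
    vecMul (uvec b) (Zb n σ b) = (b ⬝ᵥ b) • erow n := by
  funext j
  cases j <;>
    simp [erow, uvec, vecMul, dotProduct, Zb, replicateCol, replicateRow, Fintype.sum_sum_type]

lemma row_pow (b : Fin n → ℝ) (k : ℕ) :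
    (Zb n σ b ^ (2 * k)) (Sum.inr ()) = (σ * (b ⬝ᵥ b)) ^ k • erow n ∧
      (Zb n σ b ^ (2 * k + 1)) (Sum.inr ()) = (σ * (σ * (b ⬝ᵥ b)) ^ k) • uvec b := by
  induction k with
  | zero =>
    refine ⟨by simpa using row_one, ?_⟩
    simpa using row_Z b
  | succ k ih =>
    have h2 : 2 * (k + 1) = 2 * k + 1 + 1 := by ring
    have heven : (Zb n σ b ^ (2 * (k + 1))) (Sum.inr ())
        = (σ * (b ⬝ᵥ b)) ^ (k + 1) • erow n := by
      rw [h2, pow_succ, row_mul, ih.2, vecMul_smul', vecMul_u, smul_smul]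
      rw [pow_succ]; ring_nf
    refine ⟨heven, ?_⟩
    rw [pow_succ, row_mul, heven, vecMul_smul', vecMul_e, smul_smul, mul_comm]

lemma exp_hasSum (A : Matrix (Idx n) (Idx n) ℝ) :
    HasSum (fun m => (m.factorial⁻¹ : ℝ) • A ^ m) (NormedSpace.exp A) := by
  letI : SeminormedRing (Matrix (Idx n) (Idx n) ℝ) := Matrix.linftyOpSemiNormedRing
  letI : NormedRing (Matrix (Idx n) (Idx n) ℝ) := Matrix.linftyOpNormedRing
  letI : NormedAlgebra ℝ (Matrix (Idx n) (Idx n) ℝ) := Matrix.linftyOpNormedAlgebra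
  exact NormedSpace.exp_series_hasSum_exp' A

lemma row_exp_hasSum (A : Matrix (Idx n) (Idx n) ℝ) :
    HasSum (fun m => (m.factorial⁻¹ : ℝ) • (A ^ m) (Sum.inr ()))
      ((NormedSpace.exp A) (Sum.inr ())) := by
  let g : Matrix (Idx n) (Idx n) ℝ →+ (Idx n → ℝ) :=
    { toFun := fun M => M (Sum.inr ()), map_zero' := rfl, map_add' := fun _ _ => rfl }
  have hg : Continuous g := continuous_apply _
  exact (exp_hasSum A).map g hg

set_option maxHeartbeats 2000000 in
lemma row_exp (hσ : 0 < σ) (b : Fin n → ℝ) (hb : b ≠ 0) :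
    (NormedSpace.exp (Zb n σ b)) (Sum.inr ()) =
      Real.cosh (Real.sqrt (σ * (b ⬝ᵥ b))) • erow n +
        (σ / Real.sqrt (σ * (b ⬝ᵥ b)) * Real.sinh (Real.sqrt (σ * (b ⬝ᵥ b)))) • uvec b := by
  have hbb0 : (0:ℝ) ≤ b ⬝ᵥ b := Finset.sum_nonneg fun i _ => mul_self_nonneg _
  have hbb : 0 < b ⬝ᵥ b := by
    rcases lt_or_eq_of_le hbb0 with h | h
    · exact h
    · exact absurd (dotProduct_self_eq_zero.mp h.symm) hb
  set q : ℝ := σ * (b ⬝ᵥ b) with hq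
  have hq0 : 0 < q := mul_pos hσ hbb
  set t : ℝ := Real.sqrt q with ht
  have ht0 : 0 < t := Real.sqrt_pos.2 hq0
  have ht2 : t ^ 2 = q := Real.sq_sqrt hq0.le
  have hfac : ∀ m : ℕ, ((m.factorial : ℝ)) ≠ 0 := fun m =>
    Nat.cast_ne_zero.2 m.factorial_ne_zero
  have heven : HasSum
      (fun k => (((2 * k).factorial)⁻¹ : ℝ) • (Zb n σ b ^ (2 * k)) (Sum.inr ()))
      (Real.cosh t • erow n) := by
    have h := (Real.hasSum_cosh t).smul_const (erow n)
    convert h using 2 with k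
    rw [(row_pow b k).1, smul_smul]
    congr 1
    rw [pow_mul, ht2, eq_div_iff (hfac _)]
    field_simp
    rfl
  have hodd : HasSum
      (fun k => (((2 * k + 1).factorial)⁻¹ : ℝ) • (Zb n σ b ^ (2 * k + 1)) (Sum.inr ()))
      ((σ / t * Real.sinh t) • uvec b) := by
    have h := ((Real.hasSum_sinh t).mul_left (σ / t)).smul_const (uvec b)
    convert h using 2 with k
    rw [(row_pow b k).2, smul_smul]
    congr 1
    have hpow : t ^ (2 * k + 1) = t * q ^ k := by
      rw [pow_succ, pow_mul, ht2, mul_comm]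
    rw [hpow]
    field_simp
    ring
  have hF : HasSum (fun m : ℕ => ((m.factorial : ℝ))⁻¹ • (Zb n σ b ^ m) (Sum.inr ()))
      (Real.cosh t • erow n + (σ / t * Real.sinh t) • uvec b) :=
    HasSum.even_add_odd (f := fun m : ℕ => ((m.factorial : ℝ))⁻¹ • (Zb n σ b ^ m) (Sum.inr ()))
      heven hodd
  exact (row_exp_hasSum (Zb n σ b)).unique hF

lemma K_lorentz (hσ : σ ≠ 0) {k : Matrix (Idx n) (Idx n) ℝ} (hk : k ∈ Kset n) :
    kᵀ * gammaPlus n σ * k = gammaPlus n σ ∧ IsUnit k := by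
  obtain ⟨R, ε, hR, hε, rfl⟩ := hk
  have hε2 : ε * ε = 1 := by rcases hε with rfl | rfl <;> norm_num
  have hR' : R * Rᵀ = 1 := mul_eq_one_comm.mp hR
  constructor
  · simp [gammaPlus, fromBlocks_transpose, fromBlocks_multiply, transpose_smul,
      Matrix.smul_mul, Matrix.mul_smul, smul_smul, hε2, hR]
  · have h1 : fromBlocks R 0 0 (ε • (1 : Matrix Unit Unit ℝ)) * fromBlocks Rᵀ 0 0 (ε • 1)
        = 1 := by
      simp [fromBlocks_multiply, Matrix.smul_mul, Matrix.mul_smul, smul_smul, hε2, hR',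
        ← fromBlocks_one]
    have h2 : fromBlocks Rᵀ 0 0 (ε • (1 : Matrix Unit Unit ℝ)) * fromBlocks R 0 0 (ε • 1)
        = 1 := by
      simp [fromBlocks_multiply, Matrix.smul_mul, Matrix.mul_smul, smul_smul, hε2, hR,
        ← fromBlocks_one]
    exact ⟨⟨_, _, h1, h2⟩, rfl⟩

lemma mem_K_of (hσ : 0 < σ) {k : Matrix (Idx n) (Idx n) ℝ} {ε : ℝ}
    (hε : ε = 1 ∨ ε = -1)
    (hrow : k (Sum.inr ()) = ε • erow n)
    (hk : kᵀ * gammaPlus n σ * k = gammaPlus n σ) : k ∈ Kset n := by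
  classical
  set R : Matrix (Fin n) (Fin n) ℝ := Matrix.of fun i j => k (Sum.inl i) (Sum.inl j) with hRdef
  set w : Matrix (Fin n) Unit ℝ := Matrix.of fun i _ => k (Sum.inl i) (Sum.inr ()) with hwdef
  have hε2 : ε * ε = 1 := by rcases hε with rfl | rfl <;> norm_num
  have hkform : k = fromBlocks R w 0 (ε • 1) := by
    ext i j
    cases i with
    | inl i => cases j <;> rfl
    | inr i =>
      cases j with
      | inl j =>
        have := congrFun hrow (Sum.inl j)
        simpa [erow] using this
      | inr j =>
        have := congrFun hrow (Sum.inr ())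
        simpa [erow] using this
  rw [hkform] at hk
  have hmul : (fromBlocks R w 0 (ε • (1 : Matrix Unit Unit ℝ)))ᵀ * gammaPlus n σ *
      fromBlocks R w 0 (ε • 1) =
      fromBlocks ((-σ) • (Rᵀ * R)) ((-σ) • (Rᵀ * w)) ((-σ) • (wᵀ * R))
        ((-σ) • (wᵀ * w) + (ε * ε) • 1) := by
    simp [gammaPlus, fromBlocks_transpose, fromBlocks_multiply, transpose_smul,
      Matrix.smul_mul, Matrix.mul_smul, smul_smul]
  rw [hmul] at hk
  have h11 := congrArg Matrix.toBlocks₁₁ hk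
  have h22 := congrArg Matrix.toBlocks₂₂ hk
  simp only [gammaPlus, Matrix.toBlocks_fromBlocks₁₁, Matrix.toBlocks_fromBlocks₂₂] at h11 h22
  have hRR : Rᵀ * R = 1 :=
    smul_right_injective (Matrix (Fin n) (Fin n) ℝ) (neg_ne_zero.2 hσ.ne') h11
  have hww : wᵀ * w = 0 := by
    have h0 : (-σ) • (wᵀ * w) = 0 := by
      rw [hε2, one_smul] at h22
      have := congrArg (fun X => X - (1 : Matrix Unit Unit ℝ)) h22
      simpa using this
    have := (smul_eq_zero.mp h0).resolve_left (neg_ne_zero.2 hσ.ne')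
    exact this
  have hw : w = 0 := by
    have hvv : (fun i => w i ()) ⬝ᵥ (fun i => w i ()) = 0 := by
      have := congrFun (congrFun hww ()) ()
      simpa [mul_apply, dotProduct] using this
    have hv0 := dotProduct_self_eq_zero.mp hvv
    ext i j
    have := congrFun hv0 i
    simpa using this
  exact ⟨R, ε, hRR, hε, by rw [hkform, hw]⟩

end CartanAux

theorem stmt15 (n : ℕ) (hn : 1 ≤ n) (σ : ℝ) (hσ : 0 < σ) :
    { a : Matrix (Idx n) (Idx n) ℝ | IsUnit a ∧
        aᵀ * gammaPlus n σ * a = gammaPlus n σ } =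
    { a : Matrix (Idx n) (Idx n) ℝ | ∃ k ∈ Kset n, ∃ Z ∈ pSet n σ,
        a = k * NormedSpace.exp Z } := by
  have hσ0 : σ ≠ 0 := hσ.ne'
  ext a
  simp only [Set.mem_setOf_eq]
  constructor
  · rintro ⟨hu, ha⟩
    -- the "row" relation a * γ⁻¹ * aᵀ = γ⁻¹
    have h1 : aᵀ * (gammaPlus n σ * a * CartanAux.gInv n σ) = 1 := by
      rw [← mul_assoc, ← mul_assoc, ha, CartanAux.gamma_mul_gInv hσ0]
    have h2 := mul_eq_one_comm.mp h1
    have hrowrel : a * CartanAux.gInv n σ * aᵀ = CartanAux.gInv n σ := by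
      have h3 : CartanAux.gInv n σ * (gammaPlus n σ * a * CartanAux.gInv n σ * aᵀ)
          = CartanAux.gInv n σ := by rw [h2, mul_one]
      calc a * CartanAux.gInv n σ * aᵀ
          = (CartanAux.gInv n σ * gammaPlus n σ) * (a * CartanAux.gInv n σ * aᵀ) := by
            rw [CartanAux.gInv_mul_gamma hσ0, one_mul]
        _ = CartanAux.gInv n σ * (gammaPlus n σ * a * CartanAux.gInv n σ * aᵀ) := by
            simp only [mul_assoc]
        _ = CartanAux.gInv n σ := h3
    set c : Fin n → ℝ := fun j => a (Sum.inr ()) (Sum.inl j) with hc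
    set d : ℝ := a (Sum.inr ()) (Sum.inr ()) with hd
    have hdd : d * d = 1 + σ⁻¹ * (c ⬝ᵥ c) := by
      have hentry := congrFun (congrFun hrowrel (Sum.inr ())) (Sum.inr ())
      simp [CartanAux.gInv, mul_apply, Fintype.sum_sum_type, one_apply, Finset.mul_sum,
        mul_comm, mul_assoc, mul_left_comm] at hentry
      rw [hd, hc]
      simp only [dotProduct, Finset.mul_sum]
      linarith [hentry]
    by_cases hc0 : c = 0
    · -- bottom block row of a is (0, ±1); a itself is in K
      have hd2 : d * d = 1 := by rw [hdd, hc0]; simp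
      have hrow : a (Sum.inr ()) = d • CartanAux.erow n := by
        funext j
        cases j with
        | inl j =>
          have := congrFun hc0 j
          simpa [CartanAux.erow] using this
        | inr j => simp [CartanAux.erow, hd]
      have hK := CartanAux.mem_K_of hσ (mul_self_eq_one_iff.mp hd2) hrow ha
      exact ⟨a, hK, CartanAux.Zb n σ 0, CartanAux.Zb_mem 0,
        by rw [CartanAux.Zb_zero, NormedSpace.exp_zero, mul_one]⟩
    · -- main case
      have hcc0 : (0:ℝ) ≤ c ⬝ᵥ c := Finset.sum_nonneg fun i _ => mul_self_nonneg _
      have hcc : 0 < c ⬝ᵥ c :=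
        lt_of_le_of_ne hcc0 fun h => hc0 (dotProduct_self_eq_zero.mp h.symm)
      have hd1 : 1 < d * d := by
        rw [hdd]
        nlinarith [mul_pos (inv_pos.2 hσ) hcc]
      have hdne : d ≠ 0 := by intro h; rw [h] at hd1; norm_num at hd1
      set ε : ℝ := if 0 < d then 1 else -1 with hεdef
      have hεor : ε = 1 ∨ ε = -1 := by
        rw [hεdef]; split_ifs <;> simp
      have hε2 : ε * ε = 1 := by rcases hεor with h | h <;> rw [h] <;> norm_num
      have hεd : ε * d = |d| := by
        rw [hεdef]; split_ifs with h
        · rw [one_mul, abs_of_pos h]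
        · rw [neg_one_mul, abs_of_neg (lt_of_le_of_ne (not_lt.mp h) hdne)]
      set s : ℝ := Real.sqrt ((c ⬝ᵥ c) / σ) with hsdef
      have hs0 : 0 < s := Real.sqrt_pos.2 (div_pos hcc hσ)
      set t : ℝ := Real.arsinh s with htdef
      have ht0 : 0 < t := Real.arsinh_pos_iff.2 hs0
      have hsinh : Real.sinh t = s := Real.sinh_arsinh s
      have hsinh0 : 0 < Real.sinh t := by rw [hsinh]; exact hs0
      have hsinhsq : Real.sinh t ^ 2 = (c ⬝ᵥ c) / σ := by
        rw [hsinh, hsdef, Real.sq_sqrt (div_nonneg hcc0 hσ.le)]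
      have hcosh : Real.cosh t = |d| := by
        rw [htdef, Real.cosh_arsinh]
        rw [show (1 : ℝ) + s ^ 2 = d * d by
          rw [hsdef, Real.sq_sqrt (div_nonneg hcc0 hσ.le), hdd]; field_simp]
        rw [show d * d = d ^ 2 by ring, Real.sqrt_sq_eq_abs]
      set κ : ℝ := ε * t / (σ * Real.sinh t) with hκdef
      have hεne : ε ≠ 0 := by rcases hεor with h | h <;> rw [h] <;> norm_num
      have hκ0 : κ ≠ 0 := by
        rw [hκdef]
        exact div_ne_zero (mul_ne_zero hεne ht0.ne') (mul_ne_zero hσ0 hsinh0.ne')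
      set b : Fin n → ℝ := κ • c with hbdef
      have hbne : b ≠ 0 := smul_ne_zero hκ0 hc0
      have hbb : b ⬝ᵥ b = κ * κ * (c ⬝ᵥ c) := by
        simp only [hbdef, dotProduct, Pi.smul_apply, smul_eq_mul, Finset.mul_sum]
        exact Finset.sum_congr rfl fun x _ => by ring
      have hσbb : σ * (b ⬝ᵥ b) = t ^ 2 := by
        have hsne : Real.sinh t ≠ 0 := hsinh0.ne'
        have hccne : c ⬝ᵥ c ≠ 0 := hcc.ne'
        have hsinhsq' : σ * Real.sinh t ^ 2 = c ⬝ᵥ c := by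
          rw [hsinhsq]; field_simp
        rw [hbb, hκdef]
        field_simp
        linear_combination (c ⬝ᵥ c) * hε2 - hsinhsq'
      have hqt : Real.sqrt (σ * (b ⬝ᵥ b)) = t := by rw [hσbb, Real.sqrt_sq ht0.le]
      have hrowa : a (Sum.inr ()) =
          ε • (NormedSpace.exp (CartanAux.Zb n σ b)) (Sum.inr ()) := by
        rw [CartanAux.row_exp hσ b hbne, hqt, hcosh]
        funext j
        cases j with
        | inl j =>
          simp only [Pi.add_apply, Pi.smul_apply, CartanAux.erow, CartanAux.uvec,
            Sum.elim_inl, smul_eq_mul, hbdef, Pi.zero_apply, mul_zero, zero_add]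
          rw [hκdef, hc]
          have hsne : Real.sinh t ≠ 0 := hsinh0.ne'
          field_simp
          linear_combination (-(a (Sum.inr ()) (Sum.inl j))) * hε2
        | inr j =>
          simp only [Pi.add_apply, Pi.smul_apply, CartanAux.erow, CartanAux.uvec,
            Sum.elim_inr, smul_eq_mul, Pi.zero_apply, mul_zero, add_zero, Pi.one_apply,
            mul_one]
          rw [← hεd, hd]
          linear_combination (-(a (Sum.inr ()) (Sum.inr ()))) * hε2
      have hnegZ : CartanAux.Zb n σ (-b) = -CartanAux.Zb n σ b := CartanAux.Zb_neg b
      set k := a * NormedSpace.exp (CartanAux.Zb n σ (-b)) with hkdef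
      have hrowk : k (Sum.inr ()) = ε • CartanAux.erow n := by
        rw [hkdef, CartanAux.row_mul, hrowa, CartanAux.vecMul_smul', ← CartanAux.row_mul,
          hnegZ, CartanAux.exp_mul_exp_neg, CartanAux.row_one]
      have hklor : kᵀ * gammaPlus n σ * k = gammaPlus n σ := by
        rw [hkdef, transpose_mul]
        have hmid : aᵀ * (gammaPlus n σ *
            (a * NormedSpace.exp (CartanAux.Zb n σ (-b)))) =
            gammaPlus n σ * NormedSpace.exp (CartanAux.Zb n σ (-b)) := by
          rw [← mul_assoc, ← mul_assoc, ha]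
        calc (NormedSpace.exp (CartanAux.Zb n σ (-b)))ᵀ * aᵀ * gammaPlus n σ *
              (a * NormedSpace.exp (CartanAux.Zb n σ (-b)))
            = (NormedSpace.exp (CartanAux.Zb n σ (-b)))ᵀ * (aᵀ * (gammaPlus n σ *
              (a * NormedSpace.exp (CartanAux.Zb n σ (-b))))) := by simp only [mul_assoc]
          _ = (NormedSpace.exp (CartanAux.Zb n σ (-b)))ᵀ * (gammaPlus n σ *
              NormedSpace.exp (CartanAux.Zb n σ (-b))) := by rw [hmid]
          _ = gammaPlus n σ := by rw [← mul_assoc]; exact CartanAux.exp_lorentz hσ0 (-b)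
      have hK := CartanAux.mem_K_of hσ hεor hrowk hklor
      refine ⟨k, hK, CartanAux.Zb n σ b, CartanAux.Zb_mem b, ?_⟩
      rw [hkdef, mul_assoc, hnegZ, CartanAux.exp_neg_mul_exp, mul_one]
  · rintro ⟨k, hK, Z, hZ, rfl⟩
    obtain ⟨b, rfl⟩ := hZ
    obtain ⟨hklor, hkunit⟩ := CartanAux.K_lorentz hσ0 hK
    have hElor := CartanAux.exp_lorentz (n := n) hσ0 b
    constructor
    · exact hkunit.mul (Matrix.isUnit_exp _)
    · rw [transpose_mul]
      have hmid : kᵀ * (gammaPlus n σ *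
          (k * NormedSpace.exp (CartanAux.Zb n σ b))) =
          gammaPlus n σ * NormedSpace.exp (CartanAux.Zb n σ b) := by
        rw [← mul_assoc, ← mul_assoc, hklor]
      calc (NormedSpace.exp (CartanAux.Zb n σ b))ᵀ * kᵀ * gammaPlus n σ *
            (k * NormedSpace.exp (CartanAux.Zb n σ b))
          = (NormedSpace.exp (CartanAux.Zb n σ b))ᵀ * (kᵀ * (gammaPlus n σ *
            (k * NormedSpace.exp (CartanAux.Zb n σ b)))) := by simp only [mul_assoc]
        _ = (NormedSpace.exp (CartanAux.Zb n σ b))ᵀ *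
            (gammaPlus n σ * NormedSpace.exp (CartanAux.Zb n σ b)) := by rw [hmid]
        _ = gammaPlus n σ := by rw [← mul_assoc]; exact hElor
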